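/- (Coloring bound) Let I = (G, P, R) and suppose V \ P is partitioned into χ independent sets Π_1, …, Π_χ of G. Then for every k-defective clique Q ⊆ V with P ⊆ Q, |Q| ≤ |P| + Σ_{j=1}^{χ} min(⌊(1+√(8k+1))/2⌋, |Π_j|). -/

import Mathlib

open Finset

variable {V : Type*} [Fintype V] [DecidableEq V]

/-- The set of non-edges (missing edges) of the subgraph of `G` induced by `S`,
as a finset of unordered pairs. -/
def nonEdges (G : SimpleGraph V) [DecidableRel G.Adj] (S : Finset V) : Finset (Sym2 V) :=
  ((S ×ˢ S).filter fun p => p.1 ≠ p.2 ∧ ¬ G.Adj p.1 p.2).image fun p => s(p.1, p.2)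

/-- `S` is a `k`-defective clique: the complement of `G[S]` has at most `k` edges. -/
def IsDefClique (G : SimpleGraph V) [DecidableRel G.Adj] (k : ℕ) (S : Finset V) : Prop :=
  (nonEdges G S).card ≤ k

/-- `D` is a `k`-defective set: it is a `k`-defective clique in which every vertex
is non-adjacent to at least one other vertex of `D`. -/
def IsDefSet (G : SimpleGraph V) [DecidableRel G.Adj] (k : ℕ) (D : Finset V) : Prop :=
  (∀ u ∈ D, ∃ v ∈ D, v ≠ u ∧ ¬ G.Adj u v) ∧ IsDefClique G k D

lemma choose_le_imp (m k : ℕ) (h : m.choose 2 ≤ k) :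
    m ≤ Nat.floor ((1 + Real.sqrt (8 * (k : ℝ) + 1)) / 2) := by
  rcases m with _ | n
  · exact Nat.zero_le _
  have hdvd : 2 ∣ (n + 1) * n := by rw [Nat.mul_comm]; exact (Nat.even_mul_succ_self n).two_dvd
  have hchoose : 2 * ((n + 1).choose 2) = (n + 1) * n := by
    rw [Nat.choose_two_right]
    simp only [Nat.add_sub_cancel]
    exact Nat.mul_div_cancel' hdvd
  have hprod : (n + 1) * n ≤ 2 * k := by omega
  have hsq_nat : (2 * n + 1) ^ 2 ≤ 8 * k + 1 := by nlinarith
  have hsq : ((2 * n + 1 : ℕ) : ℝ) ≤ Real.sqrt (8 * (k : ℝ) + 1) := by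
    have : ((2 * n + 1 : ℕ) : ℝ) = Real.sqrt (((2 * n + 1 : ℕ) : ℝ) ^ 2) := by
      rw [Real.sqrt_sq (by positivity)]
    rw [this]
    apply Real.sqrt_le_sqrt
    calc (((2 * n + 1 : ℕ) : ℝ)) ^ 2 = (((2 * n + 1) ^ 2 : ℕ) : ℝ) := by push_cast; ring
      _ ≤ ((8 * k + 1 : ℕ) : ℝ) := by exact_mod_cast hsq_nat
      _ = 8 * (k : ℝ) + 1 := by push_cast; ring
  apply Nat.le_floor
  rw [le_div_iff₀ (by norm_num)]
  push_cast at hsq ⊢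
  linarith

/-- Coloring bound: if `V \ P` is partitioned into `χ` independent sets `Parts 1, …, Parts χ`,
then every `k`-defective clique `Q ⊇ P` satisfies
`|Q| ≤ |P| + Σ_j min(⌊(1+√(8k+1))/2⌋, |Parts j|)`. -/
theorem coloring_bound (G : SimpleGraph V) [DecidableRel G.Adj] (k : ℕ) (P : Finset V)
    (χ : ℕ) (Parts : Fin χ → Finset V)
    (hdisj : ∀ i j, i ≠ j → Disjoint (Parts i) (Parts j))
    (hcover : Finset.univ \ P = Finset.univ.biUnion Parts)
    (hind : ∀ i, ∀ u ∈ Parts i, ∀ v ∈ Parts i, u ≠ v → ¬ G.Adj u v)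
    (Q : Finset V) (hQ : IsDefClique G k Q) (hPQ : P ⊆ Q) :
    Q.card ≤ P.card +
      ∑ i : Fin χ, min (Nat.floor ((1 + Real.sqrt (8 * (k : ℝ) + 1)) / 2)) (Parts i).card := by
  -- per-part bound
  have key : ∀ i, (Q ∩ Parts i).card ≤
      min (Nat.floor ((1 + Real.sqrt (8 * (k : ℝ) + 1)) / 2)) (Parts i).card := by
    intro i
    refine le_min ?_ (card_le_card (inter_subset_right))
    apply choose_le_imp _ k
    have hsub : (Q ∩ Parts i).offDiag.image (Function.uncurry Sym2.mk) ⊆ nonEdges G Q := by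
      intro e he
      simp only [mem_image, mem_offDiag, mem_inter] at he
      obtain ⟨⟨u, v⟩, ⟨⟨huQ, huP⟩, ⟨hvQ, hvP⟩, huv⟩, rfl⟩ := he
      simp only [nonEdges, mem_image, mem_filter, mem_product]
      exact ⟨(u, v), ⟨⟨huQ, hvQ⟩, huv, hind i u huP v hvP huv⟩, rfl⟩
    calc (Q ∩ Parts i).card.choose 2 = ((Q ∩ Parts i).offDiag.image (Function.uncurry Sym2.mk)).card :=
          (Sym2.card_image_offDiag _).symm
      _ ≤ (nonEdges G Q).card := card_le_card hsub
      _ ≤ k := hQ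
  -- decomposition
  have hcov : Q ⊆ (Q ∩ P) ∪ Finset.univ.biUnion (fun i => Q ∩ Parts i) := by
    intro q hq
    by_cases hqP : q ∈ P
    · exact mem_union_left _ (mem_inter.2 ⟨hq, hqP⟩)
    · have : q ∈ Finset.univ.biUnion Parts := by
        rw [← hcover]; simp [hqP]
      simp only [mem_biUnion] at this
      obtain ⟨i, _, hi⟩ := this
      exact mem_union_right _ (mem_biUnion.2 ⟨i, mem_univ i, mem_inter.2 ⟨hq, hi⟩⟩)
  calc Q.card ≤ ((Q ∩ P) ∪ Finset.univ.biUnion (fun i => Q ∩ Parts i)).card :=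
        card_le_card hcov
    _ ≤ (Q ∩ P).card + (Finset.univ.biUnion (fun i => Q ∩ Parts i)).card := Finset.card_union_le _ _
    _ ≤ P.card + ∑ i : Fin χ, (Q ∩ Parts i).card := by
        exact add_le_add (card_le_card inter_subset_right) card_biUnion_le
    _ ≤ P.card + ∑ i : Fin χ, min (Nat.floor ((1 + Real.sqrt (8 * (k : ℝ) + 1)) / 2)) (Parts i).card := by
        gcongr with i; exact key i
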